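/- Let P be a subset of the Euclidean plane ℝ² that is simply connected (as a topological subspace), let u, v ∈ ℝ² be points with the segment [u,v] contained in P, and let p ∈ P. Then the set {x ∈ [u,v] : the segment [p,x] is contained in P} of points of [u,v] visible from p is convex (in particular it is connected, i.e., it is a subsegment of [u,v]). -/

import Mathlib

open Complex Set

noncomputable def eC (x : EuclideanSpace ℝ (Fin 2)) : ℂ := (x 0 : ℝ) + (x 1 : ℝ) * Complex.I

lemma eC_cont : Continuous eC := by
  exact ((continuous_ofReal.comp (EuclideanSpace.proj (0 : Fin 2)).continuous).add
    (((continuous_ofReal.comp (EuclideanSpace.proj (1 : Fin 2)).continuous).mul continuous_const)))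

lemma eC_add (x y : EuclideanSpace ℝ (Fin 2)) : eC (x + y) = eC x + eC y := by
  simp [eC, PiLp.add_apply]; ring

lemma eC_smul (r : ℝ) (x : EuclideanSpace ℝ (Fin 2)) : eC (r • x) = (r : ℂ) * eC x := by
  simp [eC, PiLp.smul_apply, smul_eq_mul]; ring

lemma eC_inj {x y : EuclideanSpace ℝ (Fin 2)} (h : eC x = eC y) : x = y := by
  simp only [eC, Complex.ext_iff, Complex.add_re, Complex.add_im, Complex.ofReal_re,
    Complex.ofReal_im, Complex.mul_re, Complex.mul_im, Complex.I_re, Complex.I_im] at h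
  ext i
  fin_cases i
  · simpa using h.1
  · simpa using h.2

open Complex Set Finset

lemma ball_slit {z : ℂ} (h : ‖z - 1‖ < 1) : z ∈ Complex.slitPlane := by
  rw [Complex.mem_slitPlane_iff]
  left
  have h1 := Complex.abs_re_le_norm (z - 1)
  have h2 : |z.re - 1| < 1 := by simpa using lt_of_le_of_lt h1 h
  linarith [(abs_lt.1 h2).1]

lemma prod_div_telescope (g : ℕ → ℂ) (hg : ∀ j, g j ≠ 0) (n : ℕ) :
    (∏ j ∈ Finset.range n, g (j + 1) / g j) = g n / g 0 := by
  induction n with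
  | zero => simp [div_self (hg 0)]
  | succ n ih =>
    rw [Finset.prod_range_succ, ih]
    rw [div_mul_div_comm, mul_comm, mul_div_mul_right _ _ (hg n)]

lemma exists_lift (f : ℝ → ℂ) (hf : Continuous f) (h0 : ∀ t, f t ≠ 0) :
    ∃ θ : ℝ → ℂ, Continuous θ ∧ ∀ t ∈ Icc (0:ℝ) 1, Complex.exp (θ t) = f t := by
  obtain ⟨t₀, ht₀, hmin'⟩ := isCompact_Icc.exists_isMinOn (f := fun t => ‖f t‖)
    (⟨0, by norm_num⟩ : (Icc (0:ℝ) 1).Nonempty) (hf.norm.continuousOn)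
  have hmin : ∀ t ∈ Icc (0:ℝ) 1, ‖f t₀‖ ≤ ‖f t‖ := fun t ht => hmin' ht
  set m : ℝ := ‖f t₀‖ with hm
  have hmpos : 0 < m := norm_pos_iff.2 (h0 t₀)
  have huc : UniformContinuousOn f (Icc 0 1) :=
    isCompact_Icc.uniformContinuousOn_of_continuous hf.continuousOn
  rw [Metric.uniformContinuousOn_iff] at huc
  obtain ⟨δ, hδ, hucd⟩ := huc m hmpos
  obtain ⟨n', hn'⟩ := exists_nat_one_div_lt hδ
  set n : ℕ := n' + 1 with hn
  have hnpos : (0:ℝ) < (n:ℝ) := by positivity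
  have hstep : (1:ℝ)/(n:ℝ) < δ := by
    calc (1:ℝ)/(n:ℝ) ≤ 1/(n' + 1) := by gcongr <;> push_cast [hn] <;> linarith
    _ < δ := hn'
  set T : ℕ → ℝ → ℝ := fun j t => min t ((j : ℝ) / n) with hT
  have hratio : ∀ (j : ℕ) (t : ℝ), j + 1 ≤ n →
      ‖f (T (j+1) t) / f (T j t) - 1‖ < 1 := by
    intro j t hj
    rcases le_or_gt t ((j:ℝ)/n) with h | h
    · have e1 : T j t = t := min_eq_left h
      have e2 : T (j+1) t = t := min_eq_left (h.trans (by gcongr; push_cast; linarith))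
      rw [e1, e2, div_self (h0 t)]
      simpa using zero_lt_one
    · have hjn : (j:ℝ) + 1 ≤ (n:ℝ) := by exact_mod_cast hj
      have e1 : T j t = (j:ℝ)/n := min_eq_right h.le
      have hbmem : (j:ℝ)/n ∈ Icc (0:ℝ) 1 := by
        constructor
        · positivity
        · rw [div_le_one hnpos]; linarith
      have hamem1 : T (j+1) t ∈ Icc ((j:ℝ)/n) (((j:ℝ)+1)/n) := by
        constructor
        · refine le_min h.le ((div_le_div_iff_of_pos_right hnpos).mpr (by push_cast; linarith))
        · have hc : ((j+1 : ℕ):ℝ)/(n:ℝ) = ((j:ℝ)+1)/(n:ℝ) := by push_cast; ring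
          rw [← hc]
          exact min_le_right _ _
      have hamem : T (j+1) t ∈ Icc (0:ℝ) 1 := by
        constructor
        · exact le_trans hbmem.1 hamem1.1
        · exact hamem1.2.trans (by rw [div_le_one hnpos]; linarith)
      have hdist : dist (T (j+1) t) ((j:ℝ)/n) < δ := by
        rw [Real.dist_eq, _root_.abs_of_nonneg (by linarith [hamem1.1])]
        have : T (j+1) t - (j:ℝ)/n ≤ 1/n := by
          have := hamem1.2
          have : T (j+1) t ≤ ((j:ℝ)+1)/n := hamem1.2
          have expand : ((j:ℝ)+1)/n - (j:ℝ)/n = 1/n := by ring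
          linarith
        linarith
      have hclose : dist (f (T (j+1) t)) (f ((j:ℝ)/n)) < m := hucd _ hamem _ hbmem hdist
      rw [e1]
      have hfb : m ≤ ‖f ((j:ℝ)/n)‖ := hmin _ hbmem
      have hfbpos : 0 < ‖f ((j:ℝ)/n)‖ := lt_of_lt_of_le hmpos hfb
      rw [div_sub_one (h0 _), norm_div, div_lt_one hfbpos]
      calc ‖f (T (j+1) t) - f ((j:ℝ)/n)‖ = dist (f (T (j+1) t)) (f ((j:ℝ)/n)) := by
            rw [dist_eq_norm]
        _ < m := hclose
        _ ≤ ‖f ((j:ℝ)/n)‖ := hfb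
  refine ⟨fun t => Complex.log (f 0) +
      ∑ j ∈ Finset.range n, Complex.log (f (T (j+1) t) / f (T j t)), ?_, ?_⟩
  · apply continuous_const.add
    apply continuous_finset_sum
    intro j hj
    have hjn : j + 1 ≤ n := Finset.mem_range.1 hj
    have hcont : Continuous fun t => f (T (j+1) t) / f (T j t) := by
      exact (hf.comp (continuous_id.min continuous_const)).div
        (hf.comp (continuous_id.min continuous_const)) (fun t => h0 _)
    rw [continuous_iff_continuousAt]
    intro t
    exact hcont.continuousAt.clog (ball_slit (hratio j t hjn))
  · intro t ht
    rw [Complex.exp_add, Complex.exp_sum, Complex.exp_log (h0 0)]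
    have : ∀ j ∈ Finset.range n, Complex.exp (Complex.log (f (T (j+1) t) / f (T j t)))
        = f (T (j+1) t) / f (T j t) := by
      intro j _
      exact Complex.exp_log (div_ne_zero (h0 _) (h0 _))
    rw [Finset.prod_congr rfl this, prod_div_telescope (fun j => f (T j t)) (fun j => h0 _) n]
    have e0 : T 0 t = 0 := by
      simp only [hT, Nat.cast_zero, zero_div]
      exact min_eq_right ht.1
    have en : T n t = t := by
      simp only [hT]
      rw [div_self (ne_of_gt hnpos)]
      exact min_eq_left ht.2
    rw [e0, en, mul_comm, div_mul_cancel₀ _ (h0 0)]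

open Complex Set Finset

-- Lemma U: the "winding difference" is independent of the lift
lemma lift_diff_unique (f θ₁ θ₂ : ℝ → ℂ)
    (h₁ : ContinuousOn θ₁ (Icc 0 1)) (h₂ : ContinuousOn θ₂ (Icc 0 1))
    (he₁ : ∀ t ∈ Icc (0:ℝ) 1, Complex.exp (θ₁ t) = f t)
    (he₂ : ∀ t ∈ Icc (0:ℝ) 1, Complex.exp (θ₂ t) = f t) :
    θ₁ 1 - θ₁ 0 = θ₂ 1 - θ₂ 0 := by
  set g : ℝ → ℂ := fun t => θ₁ t - θ₂ t with hg
  have hexp1 : ∀ t ∈ Icc (0:ℝ) 1, Complex.exp (g t) = 1 := by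
    intro t ht
    rw [hg]
    simp only
    rw [Complex.exp_sub, he₁ t ht, he₂ t ht, div_self]
    rw [← he₁ t ht]
    exact Complex.exp_ne_zero _
  have hint : ∀ t ∈ Icc (0:ℝ) 1, ∃ k : ℤ, g t = (k : ℂ) * (2 * Real.pi * Complex.I) := by
    intro t ht
    exact Complex.exp_eq_one_iff.1 (hexp1 t ht)
  set u : ℝ → ℝ := fun t => (g t).im / (2 * Real.pi) with hu
  have hpi : (0:ℝ) < 2 * Real.pi := by positivity
  have huint : ∀ t ∈ Icc (0:ℝ) 1, ∃ k : ℤ, u t = (k:ℝ) := by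
    intro t ht
    obtain ⟨k, hk⟩ := hint t ht
    refine ⟨k, ?_⟩
    rw [hu]
    simp only
    rw [hk]
    simp [Complex.mul_im]
  have hucont : ContinuousOn u (Icc 0 1) :=
    (Complex.continuous_im.comp_continuousOn (h₁.sub h₂)).div_const _
  have hkey : u 0 = u 1 := by
    by_contra hne
    have h01 : (0:ℝ) ∈ Icc (0:ℝ) 1 := by norm_num
    have h11 : (1:ℝ) ∈ Icc (0:ℝ) 1 := by norm_num
    obtain ⟨k0, hk0⟩ := huint 0 h01
    obtain ⟨k1, hk1⟩ := huint 1 h11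
    have hmid : ∃ t ∈ Icc (0:ℝ) 1, u t = (k0:ℝ) + 1/2 ∨ u t = (k1:ℝ) + 1/2 := by
      rcases lt_or_gt_of_ne hne with hlt | hgt
      · have : (k0:ℝ) < k1 := by rw [← hk0, ← hk1]; exact hlt
        have hk01 : k0 + 1 ≤ k1 := by exact_mod_cast Int.add_one_le_iff.mpr (by exact_mod_cast this)
        have hv : (k0:ℝ) + 1/2 ∈ Icc (u 0) (u 1) := by
          constructor
          · rw [hk0]; linarith
          · rw [hk1]
            have hc := (Int.cast_le (R := ℝ)).mpr hk01
            push_cast at hc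
            linarith
        obtain ⟨t, ht, hut⟩ := intermediate_value_Icc (zero_le_one) hucont hv
        exact ⟨t, ht, Or.inl hut⟩
      · have : (k1:ℝ) < k0 := by rw [← hk0, ← hk1]; exact hgt
        have hk01 : k1 + 1 ≤ k0 := by exact_mod_cast Int.add_one_le_iff.mpr (by exact_mod_cast this)
        have hv : (k1:ℝ) + 1/2 ∈ Icc (u 1) (u 0) := by
          constructor
          · rw [hk1]; linarith
          · rw [hk0]
            have hc := (Int.cast_le (R := ℝ)).mpr hk01
            push_cast at hc
            linarith
        obtain ⟨t, ht, hut⟩ := intermediate_value_Icc' (zero_le_one) hucont hv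
        exact ⟨t, ht, Or.inr hut⟩
    obtain ⟨t, ht, hut⟩ := hmid
    obtain ⟨k, hk⟩ := huint t ht
    rcases hut with hut | hut <;> rw [hk] at hut
    · have : (2*k : ℤ) = 2*k0 + 1 := by
        have : (2*(k:ℝ)) = 2*k0 + 1 := by linarith
        exact_mod_cast this
      omega
    · have : (2*k : ℤ) = 2*k1 + 1 := by
        have : (2*(k:ℝ)) = 2*k1 + 1 := by linarith
        exact_mod_cast this
      omega
  -- conclude
  have hre : ∀ t ∈ Icc (0:ℝ) 1, g t = ((2 * Real.pi * u t : ℝ) : ℂ) * Complex.I := by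
    intro t ht
    obtain ⟨k, hk⟩ := hint t ht
    obtain ⟨k', hk'⟩ := huint t ht
    have hkk : (k':ℝ) = k := by
      rw [← hk']
      rw [hu]; simp only
      rw [hk]
      simp [Complex.mul_im]
    rw [hk, hk']
    rw [hkk]
    push_cast
    ring
  have h0m : (0:ℝ) ∈ Icc (0:ℝ) 1 := by norm_num
  have h1m : (1:ℝ) ∈ Icc (0:ℝ) 1 := by norm_num
  have : g 1 = g 0 := by rw [hre 1 h1m, hre 0 h0m, hkey]
  have hgg : θ₁ 1 - θ₂ 1 = θ₁ 0 - θ₂ 0 := this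
  linear_combination hgg

-- locally constant real function on ℝ is constant
lemma const_of_loc {α : Type*} (f : ℝ → α) (δ : ℝ) (hδ : 0 < δ)
    (h : ∀ s t : ℝ, dist s t < δ → f s = f t) : f 0 = f 1 := by
  have hlc : IsLocallyConstant f := by
    rw [IsLocallyConstant.iff_eventually_eq]
    intro x
    filter_upwards [Metric.ball_mem_nhds x hδ] with y hy
    exact h y x hy
  exact hlc.apply_eq_of_preconnectedSpace 0 1

-- Lemma E
lemma lift_sub_eq_log {θ f : ℝ → ℂ} {a b : ℝ} (hab : a ≤ b)
    (hθ : ContinuousOn θ (Icc a b))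
    (hexp : ∀ t ∈ Icc a b, Complex.exp (θ t) = f t)
    (c : ℂ)
    (hc : ∀ t ∈ Icc a b, 0 < ((starRingEnd ℂ) c * f t).re) :
    θ b - θ a = Complex.log (f b / f a) := by
  have hamem : a ∈ Icc a b := ⟨le_refl a, hab⟩
  have hbmem : b ∈ Icc a b := ⟨hab, le_refl b⟩
  have hcne : c ≠ 0 := by
    intro h
    have := hc a hamem
    rw [h] at this
    simp at this
  set η : ℝ → ℂ := fun t => θ t - Complex.log c with hη
  have hηexp : ∀ t ∈ Icc a b, Complex.exp (η t) = f t / c := by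
    intro t ht
    rw [hη]
    simp only
    rw [Complex.exp_sub, hexp t ht, Complex.exp_log hcne]
  have hre : ∀ t ∈ Icc a b, 0 < (f t / c).re := by
    intro t ht
    have h1 : (f t / c).re = ((starRingEnd ℂ) c * f t).re / Complex.normSq c := by
      rw [Complex.div_re, Complex.mul_re, Complex.conj_re, Complex.conj_im]
      ring
    rw [h1]
    exact div_pos (hc t ht) (Complex.normSq_pos.2 hcne)
  have hcos : ∀ t ∈ Icc a b, 0 < Real.cos ((η t).im) := by
    intro t ht
    have h1 : 0 < (Complex.exp (η t)).re := by rw [hηexp t ht]; exact hre t ht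
    rw [Complex.exp_re] at h1
    nlinarith [Real.exp_pos (η t).re]
  -- integer "branch" function
  set u : ℝ → ℝ := fun t => (η t).im with hudef
  have hucont : ContinuousOn u (Icc a b) := Complex.continuous_im.comp_continuousOn
    (hθ.sub continuousOn_const)
  set k : ℝ → ℤ := fun t => round (u t / (2 * Real.pi)) with hk
  have hpi : (0:ℝ) < 2 * Real.pi := by positivity
  have hbound : ∀ t ∈ Icc a b, |u t - 2 * Real.pi * (k t)| < Real.pi / 2 := by
    intro t ht
    have h1 : |u t / (2 * Real.pi) - round (u t / (2 * Real.pi))| ≤ 1/2 := abs_sub_round _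
    have h2 : |u t - 2 * Real.pi * (k t)| ≤ Real.pi := by
      have : u t - 2 * Real.pi * (k t) = (u t / (2 * Real.pi) - round (u t / (2 * Real.pi)))
          * (2 * Real.pi) := by
        field_simp
        rfl
      rw [this, abs_mul, abs_of_pos hpi]
      calc |u t / (2 * Real.pi) - ↑(round (u t / (2 * Real.pi)))| * (2 * Real.pi)
          ≤ 1/2 * (2 * Real.pi) := by gcongr
        _ = Real.pi := by ring
    by_contra hcon
    push_neg at hcon
    have hcosr : Real.cos (u t - 2 * Real.pi * (k t)) = Real.cos (u t) := by
      have : u t - 2 * Real.pi * (k t) = u t - (k t) * (2 * Real.pi) := by ring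
      rw [this, Real.cos_sub_int_mul_two_pi]
    have hcospos : 0 < Real.cos (u t - 2 * Real.pi * (k t)) := by
      rw [hcosr]; exact hcos t ht
    rw [← Real.cos_abs] at hcospos
    have : Real.cos |u t - 2 * Real.pi * (k t)| ≤ 0 := by
      apply Real.cos_nonpos_of_pi_div_two_le_of_le hcon
      linarith
    linarith
  -- k is locally constant on Icc a b, hence constant
  have hkconst : k a = k b := by
    set k' : Icc a b → ℤ := fun t => k t with hk'
    have hu'cont : Continuous fun t : Icc a b => u t := hucont.restrict
    have hlc : IsLocallyConstant k' := by
      rw [IsLocallyConstant.iff_eventually_eq]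
      intro x
      have hcont : Continuous fun y : Icc a b => |u y - u x| :=
        (hu'cont.sub continuous_const).abs
      have hev : ∀ᶠ y : Icc a b in nhds x, |u y - u x| < Real.pi :=
        (hcont.continuousAt).eventually_lt_const (by simpa using Real.pi_pos)
      filter_upwards [hev] with y hy
      have hbx := hbound x x.2
      have hby := hbound y y.2
      have : |2 * Real.pi * (k y) - 2 * Real.pi * (k x)| < 2 * Real.pi := by
        have h1 : |2 * Real.pi * (k y) - 2 * Real.pi * (k x)|
            ≤ |2 * Real.pi * (k y) - u y| + |u y - u x| + |u x - 2 * Real.pi * (k x)| := by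
          calc |2 * Real.pi * (k y) - 2 * Real.pi * (k x)|
              = |(2 * Real.pi * (k y) - u y) + (u y - u x) + (u x - 2 * Real.pi * (k x))| := by
                ring_nf
            _ ≤ _ := by
                exact (abs_add_le _ _).trans (by gcongr; exact abs_add_le _ _)
        have h2 : |2 * Real.pi * (k y) - u y| < Real.pi / 2 := by
          rw [abs_sub_comm]; exact hby
        linarith
      have : |(k y : ℝ) - (k x : ℝ)| < 1 := by
        have hexp2 : |2 * Real.pi * (k y) - 2 * Real.pi * (k x)|
            = 2 * Real.pi * |(k y : ℝ) - (k x : ℝ)| := by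
          rw [← mul_sub, abs_mul, abs_of_pos hpi]
        rw [hexp2] at this
        nlinarith [abs_nonneg ((k y : ℝ) - (k x : ℝ))]
      have : |k y - k x| < 1 := by
        have := this
        rw [← Int.cast_sub, ← Int.cast_abs] at this
        exact_mod_cast this
      rw [abs_lt] at this
      show k ↑y = k ↑x
      omega
    exact hlc.apply_eq_of_isPreconnected (Subtype.preconnectedSpace
      isPreconnected_Icc).isPreconnected_univ (mem_univ ⟨a, hamem⟩) (mem_univ ⟨b, hbmem⟩)
  -- conclude: the imaginary variation is < π in absolute value
  have himvar : |u b - u a| < Real.pi := by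
    have hba := hbound a hamem
    have hbb := hbound b hbmem
    rw [hkconst] at hba
    calc |u b - u a| = |(u b - 2 * Real.pi * (k b)) - (u a - 2 * Real.pi * (k b))| := by ring_nf
      _ ≤ |u b - 2 * Real.pi * (k b)| + |u a - 2 * Real.pi * (k b)| := abs_sub _ _
      _ < Real.pi / 2 + Real.pi / 2 := by exact add_lt_add hbb hba
      _ = Real.pi := by ring
  have hfane : f a ≠ 0 := by
    intro h
    have := hc a hamem
    rw [h] at this
    simp at this
  have hdiffexp : Complex.exp (θ b - θ a) = f b / f a := by
    rw [Complex.exp_sub, hexp b hbmem, hexp a hamem]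
  have him : (θ b - θ a).im = u b - u a := by
    simp only [hudef, hη, Complex.sub_im]
    ring
  rw [← hdiffexp, Complex.log_exp ?_ ?_]
  · rw [him]
    have := abs_lt.1 himvar
    linarith [this.1]
  · rw [him]
    have := abs_lt.1 himvar
    linarith [this.2]

open Complex Set

lemma hp_lem (A B : ℂ) (h : 0 < ((starRingEnd ℂ) A * B).im) (s : ℝ) :
    0 < ((starRingEnd ℂ) (-(Complex.I) * (B - A)) * ((1-(s:ℂ)) * A + (s:ℂ) * B)).re := by
  have : ((starRingEnd ℂ) (-(Complex.I) * (B - A)) * ((1-(s:ℂ)) * A + (s:ℂ) * B)).re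
      = ((starRingEnd ℂ) A * B).im := by
    simp only [map_mul, map_sub, map_neg, Complex.conj_I, Complex.mul_re, Complex.mul_im,
      Complex.add_re, Complex.add_im, Complex.sub_re, Complex.sub_im, Complex.neg_re,
      Complex.neg_im, Complex.conj_re, Complex.conj_im, Complex.I_re, Complex.I_im,
      Complex.one_re, Complex.one_im, Complex.ofReal_re, Complex.ofReal_im]
    ring
  rw [this]
  exact h

lemma arg_pos_of_im_pos {z : ℂ} (h : 0 < z.im) : 0 < Complex.arg z := by
  rcases lt_or_eq_of_le (Complex.arg_nonneg_iff.2 h.le) with h' | h'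
  · exact h'
  · exfalso
    have := Complex.arg_eq_zero_iff.1 h'.symm
    linarith [this.2, h]

lemma div_im_pos {w z : ℂ} (hw : w ≠ 0) (h : 0 < ((starRingEnd ℂ) w * z).im) :
    0 < (z / w).im := by
  have h1 : (z / w).im = ((starRingEnd ℂ) w * z).im / Complex.normSq w := by
    rw [Complex.div_im, Complex.mul_im, Complex.conj_re, Complex.conj_im]
    ring
  rw [h1]
  exact div_pos h (Complex.normSq_pos.2 hw)
open Complex Set unitInterval

lemma eC_sub (x y : EuclideanSpace ℝ (Fin 2)) : eC (x - y) = eC x - eC y := by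
  have h := eC_add (x - y) y
  simp only [sub_add_cancel] at h
  linear_combination -h

lemma eC_ne {x y : EuclideanSpace ℝ (Fin 2)} (h : x ≠ y) : eC x - eC y ≠ 0 := by
  intro hc
  apply h
  apply eC_inj
  linear_combination hc

lemma seg_mem (a b : EuclideanSpace ℝ (Fin 2)) (s : ℝ) (hs : 0 ≤ s) (hs1 : s ≤ 1) :
    a + s • (b - a) ∈ segment ℝ a b := by
  refine ⟨1 - s, s, by linarith, hs, by ring, ?_⟩
  rw [smul_sub, sub_smul, one_smul]
  abel

lemma key (P : Set (EuclideanSpace ℝ (Fin 2))) (hP : SimplyConnectedSpace ↥P)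
    (p x y : EuclideanSpace ℝ (Fin 2))
    (hpx : segment ℝ p x ⊆ P) (hxy : segment ℝ x y ⊆ P) (hyp : segment ℝ y p ⊆ P)
    (w : EuclideanSpace ℝ (Fin 2)) (hw : w ∉ P)
    (l1 l2 l3 : ℝ) (h1 : 0 < l1) (h2 : 0 < l2) (h3 : 0 < l3)
    (hsum : l1 + l2 + l3 = 1) (hcomb : l1 • p + l2 • x + l3 • y = w)
    (hcr : 0 < ((starRingEnd ℂ) (eC p - eC w) * (eC x - eC w)).im) : False := by
  have hpP : p ∈ P := hpx (left_mem_segment ℝ p x)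
  have hxP : x ∈ P := hpx (right_mem_segment ℝ p x)
  have hyP : y ∈ P := hyp (left_mem_segment ℝ y p)
  set q' : ℂ := eC w with hq'
  set p' : ℂ := eC p - q' with hp'
  set x' : ℂ := eC x - q' with hx'
  set y' : ℂ := eC y - q' with hy'
  have hp'ne : p' ≠ 0 := eC_ne (fun h => hw (h ▸ hpP))
  have hx'ne : x' ≠ 0 := eC_ne (fun h => hw (h ▸ hxP))
  have hy'ne : y' ≠ 0 := eC_ne (fun h => hw (h ▸ hyP))
  have hrel : (l1:ℂ) * p' + (l2:ℂ) * x' + (l3:ℂ) * y' = 0 := by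
    have hw' : eC (l1 • p + l2 • x + l3 • y) = q' := by rw [hcomb]
    rw [eC_add, eC_add, eC_smul, eC_smul, eC_smul] at hw'
    have hsum' : ((l1:ℂ) + l2 + l3) = 1 := by exact_mod_cast congrArg (Complex.ofReal) hsum
    rw [hp', hx', hy']
    linear_combination hw' - q' * hsum'
  have R1 : l1 * p'.re + l2 * x'.re + l3 * y'.re = 0 := by
    have h := congrArg Complex.re hrel
    simpa [Complex.add_re, Complex.mul_re, Complex.ofReal_re, Complex.ofReal_im] using h
  have R2 : l1 * p'.im + l2 * x'.im + l3 * y'.im = 0 := by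
    have h := congrArg Complex.im hrel
    simpa [Complex.add_im, Complex.mul_im, Complex.ofReal_re, Complex.ofReal_im] using h
  have hcr' : 0 < p'.re * x'.im - p'.im * x'.re := by
    have he : ((starRingEnd ℂ) p' * x').im = p'.re * x'.im - p'.im * x'.re := by
      simp [Complex.mul_im]
      ring
    rwa [he] at hcr
  have hc2 : 0 < ((starRingEnd ℂ) x' * y').im := by
    have he : ((starRingEnd ℂ) x' * y').im = x'.re * y'.im - x'.im * y'.re := by
      simp [Complex.mul_im]; ring
    rw [he]
    have e1 : l3 * (x'.re * y'.im - x'.im * y'.re) = l1 * (p'.re * x'.im - p'.im * x'.re) := by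
      linear_combination x'.re * R2 - x'.im * R1
    nlinarith [mul_pos h1 hcr']
  have hc3 : 0 < ((starRingEnd ℂ) y' * p').im := by
    have he : ((starRingEnd ℂ) y' * p').im = y'.re * p'.im - y'.im * p'.re := by
      simp [Complex.mul_im]; ring
    rw [he]
    have e1 : l3 * (y'.re * p'.im - y'.im * p'.re) = l2 * (p'.re * x'.im - p'.im * x'.re) := by
      linear_combination p'.im * R1 - p'.re * R2
    nlinarith [mul_pos h2 hcr']
  -- the triangle loop
  set L : ℝ → EuclideanSpace ℝ (Fin 2) := fun t =>
    if t ≤ 1/3 then p + (3*t) • (x - p)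
    else if t ≤ 2/3 then x + (3*t-1) • (y - x)
    else y + (3*t-2) • (p - y) with hLdef
  have hinner : Continuous fun t : ℝ =>
      if t ≤ 2/3 then x + (3*t-1) • (y - x) else y + (3*t-2) • (p - y) := by
    apply Continuous.if_le
    · exact continuous_const.add (((continuous_const.mul continuous_id).sub
        continuous_const).smul continuous_const)
    · exact continuous_const.add (((continuous_const.mul continuous_id).sub
        continuous_const).smul continuous_const)
    · exact continuous_id
    · exact continuous_const
    · intro t ht
      rw [ht]
      have e1 : (3:ℝ)*(2/3)-1 = 1 := by norm_num
      have e2 : (3:ℝ)*(2/3)-2 = 0 := by norm_num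
      rw [e1, e2, one_smul, zero_smul, add_zero]
      abel
  have hLcont : Continuous L := by
    rw [hLdef]
    apply Continuous.if_le
    · exact continuous_const.add ((continuous_const.mul continuous_id).smul continuous_const)
    · exact hinner
    · exact continuous_id
    · exact continuous_const
    · intro t ht
      rw [ht]
      have e1 : (3:ℝ)*(1/3) = 1 := by norm_num
      have e2 : (3:ℝ)*(1/3)-1 = 0 := by norm_num
      rw [if_pos (by norm_num : (1:ℝ)/3 ≤ 2/3), e2, e1, one_smul, zero_smul, add_zero]
      abel
  have hLmem : ∀ t ∈ Icc (0:ℝ) 1, L t ∈ P := by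
    intro t ht
    rw [hLdef]
    simp only
    split_ifs with hA hB
    · exact hpx (seg_mem p x (3*t) (by linarith [ht.1]) (by linarith))
    · push_neg at hA
      exact hxy (seg_mem x y (3*t-1) (by linarith) (by linarith))
    · push_neg at hA hB
      exact hyp (seg_mem y p (3*t-2) (by linarith) (by linarith [ht.2]))
  have hL0 : L 0 = p := by
    rw [hLdef]
    simp only
    rw [if_pos (by norm_num : (0:ℝ) ≤ 1/3)]
    norm_num
  have hL1 : L 1 = p := by
    rw [hLdef]
    simp only
    rw [if_neg (by norm_num : ¬(1:ℝ) ≤ 1/3), if_neg (by norm_num : ¬(1:ℝ) ≤ 2/3)]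
    have e1 : (3:ℝ)*1-2 = 1 := by norm_num
    rw [e1, one_smul]
    abel
  -- the eC formulas on the three edges
  have hE1 : ∀ t ∈ Icc (0:ℝ) (1/3),
      eC (L t) - q' = (1-((3*t:ℝ):ℂ)) * p' + ((3*t:ℝ):ℂ) * x' := by
    intro t ht
    rw [hLdef]
    simp only
    rw [if_pos ht.2, eC_add, eC_smul, eC_sub, hp', hx']
    push_cast
    ring
  have hE2 : ∀ t ∈ Icc (1/3:ℝ) (2/3),
      eC (L t) - q' = (1-((3*t-1:ℝ):ℂ)) * x' + ((3*t-1:ℝ):ℂ) * y' := by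
    intro t ht
    rw [hLdef]
    simp only
    rcases le_or_gt t (1/3) with h | h
    · have heq : t = 1/3 := le_antisymm h ht.1
      subst heq
      rw [if_pos (le_refl _), eC_add, eC_smul, eC_sub, hx', hy']
      push_cast
      ring
    · rw [if_neg (not_le.2 h), if_pos ht.2, eC_add, eC_smul, eC_sub, hx', hy']
      push_cast
      ring
  have hE3 : ∀ t ∈ Icc (2/3:ℝ) 1,
      eC (L t) - q' = (1-((3*t-2:ℝ):ℂ)) * y' + ((3*t-2:ℝ):ℂ) * p' := by
    intro t ht
    rw [hLdef]
    simp only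
    rcases le_or_gt t (2/3) with h | h
    · have heq : t = 2/3 := le_antisymm h ht.1
      subst heq
      rw [if_neg (by norm_num : ¬(2:ℝ)/3 ≤ 1/3), if_pos (le_refl _),
        eC_add, eC_smul, eC_sub, hy', hp']
      push_cast
      ring
    · rw [if_neg (by linarith : ¬t ≤ 1/3), if_neg (not_le.2 h), eC_add, eC_smul, eC_sub, hy', hp']
      push_cast
      ring
  -- build the loop as a path in P
  set pt : ↥P := ⟨p, hpP⟩ with hpt
  set γ : Path pt pt :=
    { toFun := fun τ => ⟨L τ, hLmem τ τ.2⟩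
      continuous_toFun := (hLcont.comp continuous_subtype_val).subtype_mk _
      source' := by
        apply Subtype.ext
        simpa using hL0
      target' := by
        apply Subtype.ext
        simpa using hL1 } with hγ
  obtain ⟨H⟩ : Path.Homotopic γ (Path.refl pt) := SimplyConnectedSpace.paths_homotopic γ _
  set G : unitInterval × unitInterval → ℂ := fun st => eC ((H st : ↥P) : EuclideanSpace ℝ (Fin 2)) - q'
    with hG
  have hGcont : Continuous G :=
    (eC_cont.comp (continuous_subtype_val.comp H.continuous)).sub continuous_const
  have hGne : ∀ st, G st ≠ 0 := fun st => eC_ne (fun h => hw (h ▸ (H st).2))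
  obtain ⟨st₀, -, hmin'⟩ := isCompact_univ.exists_isMinOn (univ_nonempty)
    ((hGcont.norm).continuousOn : ContinuousOn (fun st => ‖G st‖) univ)
  set m : ℝ := ‖G st₀‖ with hm
  have hmpos : 0 < m := norm_pos_iff.2 (hGne st₀)
  have hmge : ∀ st, m ≤ ‖G st‖ := fun st => hmin' (mem_univ st)
  have huc := CompactSpace.uniformContinuous_of_continuous hGcont
  rw [Metric.uniformContinuous_iff] at huc
  obtain ⟨δ, hδ, hucd⟩ := huc m hmpos
  set pj : ℝ → ↥(Icc (0:ℝ) 1) := projIcc 0 1 zero_le_one with hpj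
  set F : ℝ → ℝ → ℂ := fun s t => G (pj s, pj t) with hF
  have hFcont : ∀ s, Continuous (F s) :=
    fun s => hGcont.comp ((continuous_const).prodMk (continuous_projIcc))
  have hFne : ∀ s t, F s t ≠ 0 := fun s t => hGne _
  have hpj0 : pj 0 = 0 := by
    apply Subtype.ext
    rw [hpj]
    rw [Set.coe_projIcc]
    norm_num
  have hpj1 : pj 1 = 1 := by
    apply Subtype.ext
    rw [hpj]
    rw [Set.coe_projIcc]
    norm_num
  have hF0 : ∀ s : ℝ, F s 0 = p' := by
    intro s
    rw [hF]
    simp only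
    rw [hpj0]
    show eC ((H (pj s, 0) : ↥P) : EuclideanSpace ℝ (Fin 2)) - q' = p'
    rw [H.source]
  have hF1 : ∀ s : ℝ, F s 1 = p' := by
    intro s
    rw [hF]
    simp only
    rw [hpj1]
    show eC ((H (pj s, 1) : ↥P) : EuclideanSpace ℝ (Fin 2)) - q' = p'
    rw [H.target]
  -- the chosen lifts and winding difference
  have spec : ∀ s : ℝ, ∃ θ : ℝ → ℂ, Continuous θ ∧
      ∀ t ∈ Icc (0:ℝ) 1, Complex.exp (θ t) = F s t :=
    fun s => exists_lift (F s) (hFcont s) (hFne s)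
  set θs : ℝ → ℝ → ℂ := fun s => (spec s).choose with hθs
  have θprop : ∀ s, Continuous (θs s) ∧ ∀ t ∈ Icc (0:ℝ) 1, Complex.exp (θs s t) = F s t :=
    fun s => (spec s).choose_spec
  set W : ℝ → ℂ := fun s => θs s 1 - θs s 0 with hW
  -- local constancy of W
  have hstep : ∀ s s' : ℝ, dist s s' < δ → W s = W s' := by
    intro s s' hd
    have hclose : ∀ t : ℝ, ‖F s' t - F s t‖ < m := by
      intro t
      have hdp : dist ((pj s', pj t) : unitInterval × unitInterval) (pj s, pj t) < δ := by
        rw [Prod.dist_eq]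
        simp only [dist_self]
        apply max_lt _ hδ
        calc dist (pj s') (pj s) ≤ dist s' s := by
              simpa using (LipschitzWith.projIcc (zero_le_one)).dist_le_mul s' s
          _ < δ := by rwa [dist_comm] at hd
      have := hucd hdp
      rwa [dist_eq_norm] at this
    have hball : ∀ t : ℝ, ‖F s' t / F s t - 1‖ < 1 := by
      intro t
      rw [div_sub_one (hFne s t), norm_div, div_lt_one (norm_pos_iff.2 (hFne s t))]
      exact lt_of_lt_of_le (hclose t) (hmge _)
    set θ' : ℝ → ℂ := fun t => θs s t + Complex.log (F s' t / F s t) with hθ'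
    have hθ'cont : Continuous θ' := by
      apply (θprop s).1.add
      rw [continuous_iff_continuousAt]
      intro t
      exact (((hFcont s').continuousAt).div ((hFcont s).continuousAt) (hFne s t)).clog
        (ball_slit (hball t))
    have hθ'exp : ∀ t ∈ Icc (0:ℝ) 1, Complex.exp (θ' t) = F s' t := by
      intro t ht
      rw [hθ']
      simp only
      rw [Complex.exp_add, (θprop s).2 t ht,
        Complex.exp_log (div_ne_zero (hFne s' t) (hFne s t))]
      rw [mul_comm, div_mul_cancel₀ _ (hFne s t)]
    have := lift_diff_unique (F s') (θs s') θ' ((θprop s').1.continuousOn)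
      (hθ'cont.continuousOn) ((θprop s').2) hθ'exp
    rw [hW]
    simp only
    rw [this, hθ']
    simp only
    rw [hF1 s', hF1 s, hF0 s', hF0 s]
    ring
  have hW01 : W 0 = W 1 := const_of_loc W δ hδ hstep
  -- W 1 = 0
  have hW1 : W 1 = 0 := by
    have hconst : ∀ t ∈ Icc (0:ℝ) 1, F 1 t = p' := by
      intro t ht
      rw [hF]
      simp only
      rw [hpj1]
      show eC ((H (1, pj t) : ↥P) : EuclideanSpace ℝ (Fin 2)) - q' = p'
      rw [H.apply_one]
      rfl
    have := lift_diff_unique (F 1) (θs 1) (fun _ => Complex.log p')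
      ((θprop 1).1.continuousOn) (continuousOn_const)
      ((θprop 1).2)
      (fun t ht => by rw [Complex.exp_log hp'ne, hconst t ht])
    rw [hW]
    simp only
    rw [this]
    ring
  -- F 0 along the loop
  have hF0t : ∀ t ∈ Icc (0:ℝ) 1, F 0 t = eC (L t) - q' := by
    intro t ht
    rw [hF]
    simp only
    rw [hpj0, hpj, Set.projIcc_of_mem zero_le_one ht]
    show eC ((H (0, ⟨t, ht⟩) : ↥P) : EuclideanSpace ℝ (Fin 2)) - q' = _
    rw [H.apply_zero]
    rfl
  -- edge computations
  set θ0 : ℝ → ℂ := θs 0 with hθ0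
  have hθ0cont : Continuous θ0 := (θprop 0).1
  have hθ0exp : ∀ t ∈ Icc (0:ℝ) 1, Complex.exp (θ0 t) = F 0 t := (θprop 0).2
  have hsub1 : Icc (0:ℝ) (1/3) ⊆ Icc 0 1 := Icc_subset_Icc (le_refl _) (by norm_num)
  have hsub2 : Icc (1/3:ℝ) (2/3) ⊆ Icc 0 1 := Icc_subset_Icc (by norm_num) (by norm_num)
  have hsub3 : Icc (2/3:ℝ) 1 ⊆ Icc 0 1 := Icc_subset_Icc (by norm_num) (le_refl _)
  have hFv0 : F 0 0 = p' := hF0 0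
  have hFv13 : F 0 (1/3) = x' := by
    rw [hF0t (1/3) (by norm_num), hE1 (1/3) (by norm_num)]
    norm_num
  have hFv23 : F 0 (2/3) = y' := by
    rw [hF0t (2/3) (by norm_num), hE2 (2/3) (by norm_num)]
    norm_num
  have hFv1 : F 0 1 = p' := hF1 0
  have hedge1 : θ0 (1/3) - θ0 0 = Complex.log (x' / p') := by
    have := lift_sub_eq_log (a := 0) (b := 1/3) (f := F 0) (by norm_num)
      (hθ0cont.continuousOn) (fun t ht => hθ0exp t (hsub1 ht))
      (-(Complex.I) * (x' - p'))
      (by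
        intro t ht
        rw [hF0t t (hsub1 ht), hE1 t ht]
        exact hp_lem p' x' hcr (3*t))
    rw [this, hFv13, hFv0]
  have hedge2 : θ0 (2/3) - θ0 (1/3) = Complex.log (y' / x') := by
    have := lift_sub_eq_log (a := 1/3) (b := 2/3) (f := F 0) (by norm_num)
      (hθ0cont.continuousOn) (fun t ht => hθ0exp t (hsub2 ht))
      (-(Complex.I) * (y' - x'))
      (by
        intro t ht
        rw [hF0t t (hsub2 ht), hE2 t ht]
        exact hp_lem x' y' hc2 (3*t-1))
    rw [this, hFv23, hFv13]
  have hedge3 : θ0 1 - θ0 (2/3) = Complex.log (p' / y') := by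
    have := lift_sub_eq_log (a := 2/3) (b := 1) (f := F 0) (by norm_num)
      (hθ0cont.continuousOn) (fun t ht => hθ0exp t (hsub3 ht))
      (-(Complex.I) * (p' - y'))
      (by
        intro t ht
        rw [hF0t t (hsub3 ht), hE3 t ht]
        exact hp_lem y' p' hc3 (3*t-2))
    rw [this, hFv1, hFv23]
  have hW0 : W 0 = Complex.log (x' / p') + Complex.log (y' / x') + Complex.log (p' / y') := by
    rw [hW]
    simp only
    rw [← hθ0]
    rw [← hedge1, ← hedge2, ← hedge3]
    ring
  -- contradiction via imaginary parts
  have him1 : 0 < (Complex.log (x' / p')).im := by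
    rw [Complex.log_im]
    exact arg_pos_of_im_pos (div_im_pos hp'ne hcr)
  have him2 : 0 < (Complex.log (y' / x')).im := by
    rw [Complex.log_im]
    exact arg_pos_of_im_pos (div_im_pos hx'ne hc2)
  have him3 : 0 < (Complex.log (p' / y')).im := by
    rw [Complex.log_im]
    exact arg_pos_of_im_pos (div_im_pos hy'ne hc3)
  have hzero : W 0 = 0 := by rw [hW01, hW1]
  rw [hW0] at hzero
  have := congrArg Complex.im hzero
  simp only [Complex.add_im, Complex.zero_im] at this
  linarith
lemma in_seg_of_combo (a b w : EuclideanSpace ℝ (Fin 2)) (α β : ℝ)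
    (hα : 0 ≤ α) (hβ : 0 ≤ β) (hab : α + β = 1)
    (hcombo : (α:ℂ) * (eC a - eC w) + (β:ℂ) * (eC b - eC w) = 0) :
    w ∈ segment ℝ a b := by
  refine ⟨α, β, hα, hβ, hab, ?_⟩
  apply eC_inj
  rw [eC_add, eC_smul, eC_smul]
  have hab' : ((α:ℂ) + β) = 1 := by exact_mod_cast congrArg (Complex.ofReal) hab
  linear_combination hcombo + eC w * hab'

theorem visible_part_of_segment_convex
    (P : Set (EuclideanSpace ℝ (Fin 2)))
    (hP : SimplyConnectedSpace ↥P)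
    (u v : EuclideanSpace ℝ (Fin 2))
    (huv : segment ℝ u v ⊆ P)
    (p : EuclideanSpace ℝ (Fin 2)) (hp : p ∈ P) :
    Convex ℝ {x | x ∈ segment ℝ u v ∧ segment ℝ p x ⊆ P} := by
  intro x₁ hx₁ x₂ hx₂ a b ha hb hab
  refine ⟨(convex_segment u v) hx₁.1 hx₂.1 ha hb hab, ?_⟩
  intro w hw
  by_contra hwP
  -- decompose w as a convex combination of p, x₁, x₂
  obtain ⟨c, d, hc, hd, hcd, hcombo⟩ := hw
  set l1 : ℝ := c with hl1d
  set l2 : ℝ := d * a with hl2d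
  set l3 : ℝ := d * b with hl3d
  have h2 : 0 ≤ l2 := mul_nonneg hd ha
  have h3 : 0 ≤ l3 := mul_nonneg hd hb
  have hsum : l1 + l2 + l3 = 1 := by
    rw [hl1d, hl2d, hl3d]
    calc c + d * a + d * b = c + d * (a + b) := by ring
      _ = 1 := by rw [hab, mul_one, hcd]
  have hcomb : l1 • p + l2 • x₁ + l3 • x₂ = w := by
    rw [← hcombo, hl1d, hl2d, hl3d]
    rw [smul_add, smul_smul, smul_smul]
    abel
  -- the edges of the triangle are in P
  have hseg12 : segment ℝ x₁ x₂ ⊆ P :=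
    fun z hz => huv ((convex_segment u v).segment_subset hx₁.1 hx₂.1 hz)
  have hseg21 : segment ℝ x₂ x₁ ⊆ P := by rw [segment_symm]; exact hseg12
  have hseg2p : segment ℝ x₂ p ⊆ P := by rw [segment_symm]; exact hx₂.2
  have hseg1p : segment ℝ x₁ p ⊆ P := by rw [segment_symm]; exact hx₁.2
  -- degenerate coefficients
  rcases eq_or_lt_of_le hc with hc0 | hc0
  · apply hwP
    apply hseg12
    refine ⟨l2, l3, h2, h3, by rw [← hc0] at hsum; linarith, ?_⟩
    rw [← hcomb, ← hc0, zero_smul, zero_add]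
  rcases eq_or_lt_of_le h2 with h20 | h20
  · apply hwP
    apply hx₂.2
    refine ⟨l1, l3, hc, h3, by rw [← h20] at hsum; linarith, ?_⟩
    rw [← hcomb, ← h20, zero_smul, add_zero]
  rcases eq_or_lt_of_le h3 with h30 | h30
  · apply hwP
    apply hx₁.2
    refine ⟨l1, l2, hc, h2, by rw [← h30] at hsum; linarith, ?_⟩
    rw [← hcomb, ← h30, zero_smul, add_zero]
  -- now all coefficients are positive
  set p' : ℂ := eC p - eC w with hp'
  set x' : ℂ := eC x₁ - eC w with hx'
  set y' : ℂ := eC x₂ - eC w with hy'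
  have hwne : ∀ z ∈ P, z ≠ w := fun z hz he => hwP (he ▸ hz)
  have hx1P : x₁ ∈ P := hx₁.2 (right_mem_segment ℝ p x₁)
  have hx2P : x₂ ∈ P := hx₂.2 (right_mem_segment ℝ p x₂)
  have hp'ne : p' ≠ 0 := eC_ne (hwne p hp)
  have hx'ne : x' ≠ 0 := eC_ne (hwne x₁ hx1P)
  have hy'ne : y' ≠ 0 := eC_ne (hwne x₂ hx2P)
  have hrel : (l1:ℂ) * p' + (l2:ℂ) * x' + (l3:ℂ) * y' = 0 := by
    have hw' : eC (l1 • p + l2 • x₁ + l3 • x₂) = eC w := by rw [hcomb]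
    rw [eC_add, eC_add, eC_smul, eC_smul, eC_smul] at hw'
    have hsum' : ((l1:ℂ) + l2 + l3) = 1 := by exact_mod_cast congrArg (Complex.ofReal) hsum
    rw [hp', hx', hy']
    linear_combination hw' - eC w * hsum'
  have R1 : l1 * p'.re + l2 * x'.re + l3 * y'.re = 0 := by
    have h := congrArg Complex.re hrel
    simpa [Complex.add_re, Complex.mul_re, Complex.ofReal_re, Complex.ofReal_im] using h
  have R2 : l1 * p'.im + l2 * x'.im + l3 * y'.im = 0 := by
    have h := congrArg Complex.im hrel
    simpa [Complex.add_im, Complex.mul_im, Complex.ofReal_re, Complex.ofReal_im] using h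
  have hcrform : ((starRingEnd ℂ) p' * x').im = p'.re * x'.im - p'.im * x'.re := by
    simp [Complex.mul_im]; ring
  rcases lt_trichotomy 0 (((starRingEnd ℂ) p' * x').im) with hcr | hcr | hcr
  · exact key P hP p x₁ x₂ hx₁.2 hseg12 hseg2p w hwP l1 l2 l3 hc0 h20 h30 hsum hcomb hcr
  · -- degenerate (collinear) case
    have hcr0 : p'.re * x'.im - p'.im * x'.re = 0 := by rw [← hcrform, ← hcr]
    -- x' is a real multiple of p'
    set t : ℝ := ((starRingEnd ℂ) p' * x').re with ht
    have hmc : (starRingEnd ℂ) p' * x' = ((t:ℝ):ℂ) := by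
      apply Complex.ext
      · simp [ht]
      · simp [← hcr]
    have hns : (Complex.normSq p' : ℂ) ≠ 0 := by
      exact_mod_cast Complex.ofReal_ne_zero.2 (ne_of_gt (Complex.normSq_pos.2 hp'ne))
    set r : ℝ := t / Complex.normSq p' with hr
    have hx1r : x' = (r:ℂ) * p' := by
      have hmul : (Complex.normSq p' : ℂ) * x' = ((t:ℝ):ℂ) * p' := by
        linear_combination p' * hmc - x' * (Complex.mul_conj p')
      rw [hr]
      push_cast
      rw [div_mul_eq_mul_div, eq_div_iff hns]
      linear_combination hmul
    -- x₂' is also a real multiple of p'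
    set r2 : ℝ := -(l1 + l2*r)/l3 with hr2
    have hx2r : y' = (r2:ℂ) * p' := by
      have h3c : ((l3:ℝ):ℂ) ≠ 0 := Complex.ofReal_ne_zero.2 (ne_of_gt h30)
      rw [hr2]
      push_cast
      rw [div_mul_eq_mul_div, eq_div_iff h3c]
      linear_combination hrel - (l2:ℂ) * hx1r
    have hsum0 : l1 + l2*r + l3*r2 = 0 := by
      rw [hr2]
      field_simp
      ring
    rcases le_or_gt 0 r with hrpos | hrneg
    · -- r2 < 0 : w lies on segment [p, x₂]
      have hr2neg : r2 < 0 := by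
        rw [hr2]
        apply div_neg_of_neg_of_pos _ h30
        nlinarith
      have hden : ((1:ℝ) - r2) ≠ 0 := by linarith
      apply hwP
      apply hx₂.2
      apply in_seg_of_combo p x₂ w (-r2/(1-r2)) (1/(1-r2))
        (div_nonneg (by linarith) (by linarith))
        (div_nonneg (by linarith) (by linarith))
        (by field_simp [hden]; ring)
      rw [← hp', ← hy', hx2r]
      push_cast
      field_simp [hden]
      ring
    · -- r < 0 : w lies on segment [p, x₁]
      have hden : ((1:ℝ) - r) ≠ 0 := by linarith
      apply hwP
      apply hx₁.2
      apply in_seg_of_combo p x₁ w (-r/(1-r)) (1/(1-r))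
        (div_nonneg (by linarith) (by linarith))
        (div_nonneg (by linarith) (by linarith))
        (by field_simp [hden]; ring)
      rw [← hp', ← hx', hx1r]
      push_cast
      field_simp [hden]
      ring
  · -- negative cross: swap x₁ and x₂
    have hcr2 : 0 < ((starRingEnd ℂ) p' * y').im := by
      have he : ((starRingEnd ℂ) p' * y').im = p'.re * y'.im - p'.im * y'.re := by
        simp [Complex.mul_im]; ring
      rw [he]
      have hcrneg : p'.re * x'.im - p'.im * x'.re < 0 := by rw [← hcrform]; exact hcr
      have e1 : l3 * (p'.re * y'.im - p'.im * y'.re)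
          = -l2 * (p'.re * x'.im - p'.im * x'.re) := by
        linear_combination p'.re * R2 - p'.im * R1
      nlinarith [mul_pos h20 (neg_pos.2 hcrneg)]
    have hcomb' : l1 • p + l3 • x₂ + l2 • x₁ = w := by rw [← hcomb]; abel
    exact key P hP p x₂ x₁ hx₂.2 hseg21 hseg1p w hwP l1 l3 l2 hc0 h30 h20
      (by linarith) hcomb' hcr2
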